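/- arXiv:1708.06228 — 6 statements merged into one kernel-verified Lean document; each statement's English description precedes it below -/
import Mathlib

section
/- Let b ≥ 2 and S ⊆ ℕ. For a digit a ∈ {0,...,b-1}, define Δ(S,a) = {n ∈ ℕ : n·b + a ∈ S}. Then S is ultimately periodic if and only if Δ(S,a) is ultimately periodic for every digit a ∈ {0,...,b-1}. -/
def UltPeriodic (S : Set ℕ) : Prop :=
  ∃ m, ∃ p ≥ 1, ∀ n ≥ m, (n ∈ S ↔ n + p ∈ S)

def Delta (b : ℕ) (S : Set ℕ) (a : ℕ) : Set ℕ := {n | n * b + a ∈ S}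

lemma ult_mul (S : Set ℕ) (m p : ℕ) (h : ∀ n ≥ m, (n ∈ S ↔ n + p ∈ S)) :
    ∀ k, ∀ n ≥ m, (n ∈ S ↔ n + k * p ∈ S) := by
  intro k
  induction k with
  | zero => simp
  | succ k ih =>
    intro n hn
    rw [ih n hn, h (n + k * p) (le_trans hn (Nat.le_add_right _ _))]
    ring_nf

theorem stmt_0 (b : ℕ) (hb : 2 ≤ b) (S : Set ℕ) :
    UltPeriodic S ↔ ∀ a < b, UltPeriodic (Delta b S a) := by
  constructor
  · rintro ⟨m, p, hp, h⟩ a ha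
    refine ⟨m, p, hp, ?_⟩
    intro n hn
    have hmb : n * b + a ≥ m := by nlinarith
    have := ult_mul S m p h b (n * b + a) hmb
    simp only [Delta, Set.mem_setOf_eq]
    rw [this]
    ring_nf
  · intro h
    choose! m p hp hper using h
    set P : ℕ := ∏ a ∈ Finset.range b, p a with hP
    have hP1 : 1 ≤ P := Finset.one_le_prod' fun a ha => hp a (Finset.mem_range.mp ha)
    refine ⟨b * (1 + ∑ a ∈ Finset.range b, m a), b * P, ?_, ?_⟩
    · nlinarith
    · intro n hn
      set a := n % b with ha
      set q := n / b with hq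
      have hab : a < b := Nat.mod_lt _ (by omega)
      have hn1 : n = q * b + a := by rw [hq, ha, Nat.div_add_mod'] 
      have hq1 : q ≥ m a := by
        have h1 : q ≥ 1 + ∑ a ∈ Finset.range b, m a := by
          rw [hq]
          calc 1 + ∑ a ∈ Finset.range b, m a
              = b * (1 + ∑ a ∈ Finset.range b, m a) / b := by
                rw [Nat.mul_div_cancel_left _ (by omega : 0 < b)]
            _ ≤ n / b := Nat.div_le_div_right hn
        have h2 : m a ≤ ∑ x ∈ Finset.range b, m x :=
          Finset.single_le_sum (fun _ _ => Nat.zero_le _) (Finset.mem_range.mpr hab)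
        omega
      obtain ⟨k, hk⟩ : p a ∣ P := Finset.dvd_prod_of_mem p (Finset.mem_range.mpr hab)
      have key := ult_mul (Delta b S a) (m a) (p a) (hper a hab) k q hq1
      simp only [Delta, Set.mem_setOf_eq] at key
      have e1 : q * b + a = n := hn1.symm
      have e2 : (q + k * p a) * b + a = n + b * P := by
        rw [hn1, hk]; ring
      rw [e1, e2] at key
      exact key
end

section
/- Let b ≥ 2, S ⊆ ℕ ultimately periodic with preperiod m and period p, and a a digit with 0 ≤ a < b. Then Δ(S,a) = {n : nb + a ∈ S} has preperiod at most ⌈(m - a)/b⌉ and period dividing p / gcd(p,b). In particular the preperiod of Δ(S,a) is at most m and the smallest period of Δ(S,a) is at most p. -/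
theorem stmt_2 (b : ℕ) (hb : 2 ≤ b) (S : Set ℕ) (m p : ℕ) (hp : 1 ≤ p)
    (hS : ∀ n ≥ m, (n ∈ S ↔ n + p ∈ S)) (a : ℕ) (ha : a < b) :
    (∀ n ≥ (m - a + b - 1) / b,
        (n ∈ Delta b S a ↔ n + p / Nat.gcd p b ∈ Delta b S a)) ∧
    (∀ n ≥ m, (n ∈ Delta b S a ↔ n + p / Nat.gcd p b ∈ Delta b S a)) ∧
    p / Nat.gcd p b ≤ p := by
  have hbpos : 0 < b := by omega
  -- multiples of p are periods
  have hmul : ∀ k, ∀ n ≥ m, (n ∈ S ↔ n + k * p ∈ S) := by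
    intro k
    induction k with
    | zero => simp
    | succ k ih =>
      intro n hn
      have h1 := ih n hn
      have h2 := hS (n + k * p) (le_trans hn (Nat.le_add_right _ _))
      rw [h1, h2]
      ring_nf
  set g := Nat.gcd p b with hg
  have hgp : g ∣ p := Nat.gcd_dvd_left p b
  have hgb : g ∣ b := Nat.gcd_dvd_right p b
  have hkey : (p / g) * b = (b / g) * p := by
    calc (p / g) * b = (p / g) * ((b / g) * g) := by rw [Nat.div_mul_cancel hgb]
      _ = (b / g) * ((p / g) * g) := by ring
      _ = (b / g) * p := by rw [Nat.div_mul_cancel hgp]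
  -- first claim
  have first : ∀ n ≥ (m - a + b - 1) / b,
      (n ∈ Delta b S a ↔ n + p / g ∈ Delta b S a) := by
    intro n hn
    have hm : m ≤ n * b + a := by
      by_contra h
      push_neg at h
      have h1 : (n + 1) * b ≤ m - a + b - 1 := by
        have hx : n * b + 1 ≤ m - a := by omega
        calc (n + 1) * b = n * b + b := by ring
          _ ≤ m - a + b - 1 := by omega
      have h2 : n + 1 ≤ (m - a + b - 1) / b := (Nat.le_div_iff_mul_le hbpos).2 h1
      omega
    have := hmul (b / g) (n * b + a) hm
    simp only [Delta, Set.mem_setOf_eq]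
    rw [this]
    constructor <;> intro h <;> [skip; skip] <;>
      · have e : (n + p / g) * b + a = n * b + a + (b / g) * p := by
          rw [Nat.add_mul, hkey]; ring
        simp_all [e]
  refine ⟨first, fun n hn => first n ?_, Nat.div_le_self _ _⟩
  -- (m - a + b - 1)/b ≤ m ≤ n
  have hm1 : m ≤ m * b := Nat.le_mul_of_pos_right m hbpos
  have h2 : Nat.succ m * b = m * b + b := Nat.succ_mul m b
  have : (m - a + b - 1) / b ≤ m :=
    Nat.lt_succ_iff.mp ((Nat.div_lt_iff_lt_mul hbpos).mpr (by omega))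
  omega
end

section
/- Let b ≥ 2, S ⊆ ℕ with smallest period p (for all n ≥ m, n ∈ S ↔ n+p ∈ S, and p minimal among such periods for some preperiod). If p is not coprime with b, then for every digit a ∈ {0,...,b-1}, the smallest period of Δ(S,a) = {n : nb+a ∈ S} is strictly smaller than p. -/
/-- The set of (eventual) periods of `S`. -/
def Periods (S : Set ℕ) : Set ℕ :=
  {p | 1 ≤ p ∧ ∃ m, ∀ n ≥ m, (n ∈ S ↔ n + p ∈ S)}

theorem stmt_3 (b : ℕ) (hb : 2 ≤ b) (S : Set ℕ) (p : ℕ)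
    (hup : p ∈ Periods S) (hmin : p = sInf (Periods S))
    (hncop : ¬ Nat.Coprime p b) :
    ∀ a < b, sInf (Periods (Delta b S a)) < p := by
  intro a ha
  obtain ⟨hp1, m, hm⟩ := hup
  set g := Nat.gcd p b with hg
  have hg0 : g ≠ 0 := by
    intro h
    have := Nat.gcd_eq_zero_iff.mp (hg ▸ h)
    omega
  have hg2 : 2 ≤ g := by
    rcases Nat.lt_or_ge g 2 with h | h
    · interval_cases g
      · exact absurd rfl hg0
      · exact absurd hg.symm hncop
    · exact h
  set q := p / g with hqdef
  have hqg : q * g = p := Nat.div_mul_cancel (Nat.gcd_dvd_left p b)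
  have hq1 : 1 ≤ q := by
    rcases Nat.eq_zero_or_pos q with h | h
    · rw [h, zero_mul] at hqg; omega
    · exact h
  have hqp : q < p := Nat.div_lt_self (by omega) (by omega)
  have hiter : ∀ k, ∀ n ≥ m, (n ∈ S ↔ n + k * p ∈ S) := by
    intro k
    induction k with
    | zero => simp
    | succ k ih =>
      intro n hn
      rw [ih n hn, show n + (k+1)*p = (n + k*p) + p by ring]
      exact hm (n + k * p) (le_trans hn (Nat.le_add_right _ _))
  have hqb : q * b = (b / g) * p := by
    have hb' : g * (b / g) = b := Nat.mul_div_cancel' (Nat.gcd_dvd_right p b)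
    calc q * b = q * (g * (b / g)) := by rw [hb']
    _ = (q * g) * (b / g) := by ring
    _ = (b / g) * p := by rw [hqg]; ring
  have hmem : q ∈ Periods (Delta b S a) := by
    refine ⟨hq1, m, fun n hn => ?_⟩
    show n * b + a ∈ S ↔ (n + q) * b + a ∈ S
    have hge : n * b + a ≥ m := by nlinarith
    have := hiter (b / g) (n * b + a) hge
    rw [this]
    congr! 1
    rw [add_mul, hqb]; ring
  calc sInf (Periods (Delta b S a)) ≤ q := Nat.sInf_le hmem
  _ < p := hqp
end

section
/- Let b ≥ 2 and let m be the smallest preperiod of an ultimately periodic set S ⊆ ℕ. For any nonzero digit a ∈ {1,...,b-1}, if m > 0 then the smallest preperiod of Δ(S,a) = {n : nb+a ∈ S} is strictly smaller than m. -/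
/-- The set of valid preperiods of `S`. -/
def Preperiods (S : Set ℕ) : Set ℕ :=
  {m | ∃ p ≥ 1, ∀ n ≥ m, (n ∈ S ↔ n + p ∈ S)}

theorem stmt_4 (b : ℕ) (hb : 2 ≤ b) (S : Set ℕ) (m : ℕ)
    (hup : m ∈ Preperiods S) (hmin : m = sInf (Preperiods S)) (hm : 0 < m)
    (a : ℕ) (ha1 : 1 ≤ a) (ha2 : a < b) :
    sInf (Preperiods (Delta b S a)) < m := by
  obtain ⟨p, hp1, hp⟩ := hup
  -- iterate periodicity
  have hiter : ∀ k n, n ≥ m → (n ∈ S ↔ n + k * p ∈ S) := by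
    intro k
    induction k with
    | zero => simp
    | succ k ih =>
      intro n hn
      have h2 := hp (n + k * p) (le_trans hn (Nat.le_add_right _ _))
      have heq : n + (k + 1) * p = n + k * p + p := by ring
      rw [heq, ← h2, ← ih n hn]
  have hmem : m - 1 ∈ Preperiods (Delta b S a) := by
    refine ⟨p, hp1, ?_⟩
    intro n hn
    have h1 : n * b ≥ (m - 1) * b := Nat.mul_le_mul_right _ hn
    have h2 : (m - 1) * b ≥ (m - 1) * 2 := Nat.mul_le_mul_left _ hb
    have hnb : n * b + a ≥ m := by omega
    have h3 := hiter b (n * b + a) hnb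
    have heq : (n + p) * b + a = n * b + a + b * p := by ring
    simp only [Delta, Set.mem_setOf_eq, heq]
    exact h3
  calc sInf (Preperiods (Delta b S a)) ≤ m - 1 := Nat.sInf_le hmem
    _ < m := by omega
end

section
/- Let b ≥ 2 and let S ⊆ ℕ be ultimately periodic with smallest preperiod m > 1. Then for every digit a ∈ {0,...,b-1}, the smallest preperiod of Δ(S,a) = {n : nb + a ∈ S} is strictly smaller than m. -/
theorem stmt_5 (b : ℕ) (hb : 2 ≤ b) (S : Set ℕ) (m : ℕ)
    (hup : m ∈ Preperiods S) (hmin : m = sInf (Preperiods S)) (hm : 1 < m) :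
    ∀ a < b, sInf (Preperiods (Delta b S a)) < m := by
  intro a ha
  obtain ⟨p, hp1, hp⟩ := hup
  have iter : ∀ k n, m ≤ n → (n ∈ S ↔ n + k * p ∈ S) := by
    intro k
    induction k with
    | zero => simp
    | succ k ih =>
      intro n hn
      rw [ih n hn, hp (n + k * p) (le_trans hn (Nat.le_add_right _ _)),
        show n + k * p + p = n + (k + 1) * p by ring]
  have key : m - 1 ∈ Preperiods (Delta b S a) := by
    refine ⟨p, hp1, fun n hn => ?_⟩
    simp only [Delta, Set.mem_setOf_eq]
    have h2 : (m - 1) * 2 ≤ n * b := Nat.mul_le_mul hn hb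
    have hnb : m ≤ n * b + a := by omega
    rw [iter b (n * b + a) hnb, show (n + p) * b + a = n * b + a + b * p by ring]
  have := Nat.sInf_le key
  omega
end

section
/- Let b ≥ 2 and S ⊆ ℕ ultimately periodic. The collection of all sets Δ-reachable from S (i.e., sets of the form Δ(S,u) for words u over {0,...,b-1}, where Δ(S,a) = {n : nb+a ∈ S} extended to words) is finite. -/
/-- `Delta` extended to words. -/
def DeltaW (b : ℕ) (S : Set ℕ) : List ℕ → Set ℕ
  | [] => S
  | a :: u => DeltaW b (Delta b S a) u

theorem stmt_11 (b : ℕ) (hb : 2 ≤ b) (S : Set ℕ) (hS : UltPeriodic S) :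
    {T : Set ℕ | ∃ u : List ℕ, (∀ d ∈ u, d < b) ∧ DeltaW b S u = T}.Finite := by
  obtain ⟨m, p, hp, hmp⟩ := hS
  set P : Set (Set ℕ) := {T | ∀ n ≥ m, (n ∈ T ↔ n + p ∈ T)} with hP
  -- multiples of the period
  have hmul : ∀ T ∈ P, ∀ k ≥ m, ∀ j : ℕ, (k ∈ T ↔ k + p * j ∈ T) := by
    intro T hT k hk j
    induction j with
    | zero => simp
    | succ j ih =>
      rw [ih, Nat.mul_succ, ← Nat.add_assoc]
      exact hT (k + p * j) (le_trans hk (Nat.le_add_right _ _))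
  -- Delta preserves P
  have hΔ : ∀ T ∈ P, ∀ a, Delta b T a ∈ P := by
    intro T hT a n hn
    have h1 : n * b + a ≥ m := by
      calc m ≤ n := hn
        _ ≤ n * b := Nat.le_mul_of_pos_right n (by omega)
        _ ≤ n * b + a := Nat.le_add_right _ _
    have := hmul T hT (n * b + a) h1 b
    simp only [Delta, Set.mem_setOf_eq]
    have he : n * b + a + p * b = (n + p) * b + a := by ring
    rw [this, he]
  have hW : ∀ u : List ℕ, ∀ T ∈ P, DeltaW b T u ∈ P := by
    intro u
    induction u with
    | nil => intro T hT; exact hT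
    | cons a u ih => intro T hT; exact ih _ (hΔ T hT a)
  have hsub : {T : Set ℕ | ∃ u : List ℕ, (∀ d ∈ u, d < b) ∧ DeltaW b S u = T} ⊆ P := by
    rintro T ⟨u, -, rfl⟩
    exact hW u S hmp
  -- P is finite
  have hfin : P.Finite := by
    rw [← Set.finite_coe_iff]
    have hf : Function.Injective (fun T : P => (fun i : Fin (m + p) => (i : ℕ) ∈ T.1)) := by
      rintro ⟨T₁, hT₁⟩ ⟨T₂, hT₂⟩ h
      have hlt : ∀ k < m + p, (k ∈ T₁ ↔ k ∈ T₂) := by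
        intro k hk
        have := congrFun h ⟨k, hk⟩
        simpa using Iff.of_eq this
      have key : ∀ n, (n ∈ T₁ ↔ n ∈ T₂) := by
        intro n
        induction n using Nat.strong_induction_on with
        | _ n ih =>
          by_cases hn : n < m + p
          · exact hlt n hn
          · push_neg at hn
            have h1 : n - p ≥ m := by omega
            have h2 : n - p + p = n := by omega
            have e1 := hT₁ (n - p) h1
            have e2 := hT₂ (n - p) h1
            rw [h2] at e1 e2
            rw [← e1, ← e2]
            exact ih (n - p) (by omega)
      ext1
      exact Set.ext fun n => key n
    exact Finite.of_injective _ hf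
  exact hfin.subset hsub
end
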